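/- A density matrix ρ has zero ergotropy, E(ρ) = 0, if and only if ρ is passive: ρ commutes with H and, writing the common eigenbasis with H-eigenvalues ε_1 ≤ ... ≤ ε_d, the corresponding populations of ρ satisfy r_1 ≥ ... ≥ r_d (no population inversion; for degenerate levels any ordering is allowed). -/

import Mathlib

open Matrix
open scoped ComplexOrder

/-- Energy of a state `ρ` with respect to Hamiltonian `H`: `Tr[Hρ]` (real part). -/
noncomputable def energy {d : ℕ} (H ρ : Matrix (Fin d) (Fin d) ℂ) : ℝ :=
  (Matrix.trace (H * ρ)).re

/-- Minimal energy achievable from `ρ` by unitaries (passive-state energy). -/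
noncomputable def passiveEnergy {d : ℕ} (H ρ : Matrix (Fin d) (Fin d) ℂ) : ℝ :=
  sInf {x : ℝ | ∃ U ∈ Matrix.unitaryGroup (Fin d) ℂ, x = energy H (U * ρ * Uᴴ)}

/-- Ergotropy: maximal work extractable by unitaries. -/
noncomputable def ergotropy {d : ℕ} (H ρ : Matrix (Fin d) (Fin d) ℂ) : ℝ :=
  energy H ρ - passiveEnergy H ρ


namespace ErgoAux
open Finset



/-! ### Core combinatorial inequality over `Finset.range` -/

noncomputable def Slack (d : ℕ) (s : ℕ → ℕ → ℝ) (e r : ℕ → ℝ) : ℝ :=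
  ∑ i ∈ range d, e i * ((∑ j ∈ range d, s i j * r j) - r i)

lemma Slack_eq (d : ℕ) (s : ℕ → ℕ → ℝ) (e r : ℕ → ℝ) :
    Slack d s e r
      = (∑ i ∈ range d, ∑ j ∈ range d, e i * r j * s i j) - ∑ i ∈ range d, e i * r i := by
  unfold Slack
  rw [← Finset.sum_sub_distrib]
  refine Finset.sum_congr rfl fun i _ => ?_
  rw [mul_sub, Finset.mul_sum]
  congr 1
  exact Finset.sum_congr rfl fun j _ => by ring

lemma Slack_sub_smul (d : ℕ) (s : ℕ → ℕ → ℝ) (e e' r : ℕ → ℝ) (t : ℝ) :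
    Slack d s (fun i => e i - t * e' i) r = Slack d s e r - t * Slack d s e' r := by
  unfold Slack
  rw [Finset.mul_sum, ← Finset.sum_sub_distrib]
  exact Finset.sum_congr rfl fun i _ => by ring

lemma Slack_sub_smul_right (d : ℕ) (s : ℕ → ℕ → ℝ) (e r r' : ℕ → ℝ) (t : ℝ) :
    Slack d s e (fun j => r j - t * r' j) = Slack d s e r - t * Slack d s e r' := by
  unfold Slack
  rw [Finset.mul_sum, ← Finset.sum_sub_distrib]
  refine Finset.sum_congr rfl fun i _ => ?_
  have h : ∑ j ∈ range d, s i j * (r j - t * r' j)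
      = (∑ j ∈ range d, s i j * r j) - t * ∑ j ∈ range d, s i j * r' j := by
    rw [Finset.mul_sum, ← Finset.sum_sub_distrib]
    exact Finset.sum_congr rfl fun j _ => by ring
  rw [h]; ring

/-- Abel summation / telescoping. -/
lemma telescope (d : ℕ) (w f : ℕ → ℝ) :
    ∑ i ∈ range d, w i * f i
      = f 0 * (∑ i ∈ range d, w i)
        + ∑ k ∈ range d, (f k - f (k-1)) * (∑ i ∈ range d, if k ≤ i then w i else 0) := by
  have key : ∀ i ∈ range d,
      (∑ k ∈ range d, if k ≤ i then f k - f (k-1) else 0) = f i - f 0 := by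
    intro i hi
    rw [mem_range] at hi
    rw [← Finset.sum_filter]
    have hf : (range d).filter (fun k => k ≤ i) = range (i+1) := by
      ext k
      simp only [mem_filter, mem_range, Nat.lt_succ_iff]
      exact ⟨fun h => h.2, fun h => ⟨lt_of_le_of_lt h hi, h⟩⟩
    rw [hf, Finset.sum_range_succ']
    simp only [Nat.add_sub_cancel, Nat.zero_sub, sub_self, add_zero]
    exact Finset.sum_range_sub (fun k => f k) i
  have swap : ∑ k ∈ range d, (f k - f (k-1)) * (∑ i ∈ range d, if k ≤ i then w i else 0)
      = ∑ i ∈ range d, w i * (∑ k ∈ range d, if k ≤ i then f k - f (k-1) else 0) := by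
    simp only [Finset.mul_sum]
    rw [Finset.sum_comm]
    refine Finset.sum_congr rfl fun i _ => Finset.sum_congr rfl fun k _ => ?_
    split <;> ring
  rw [swap, Finset.mul_sum, ← Finset.sum_add_distrib]
  refine Finset.sum_congr rfl fun i hi => ?_
  rw [key i hi]; ring


section Core
variable {d : ℕ} {s : ℕ → ℕ → ℝ} {e r : ℕ → ℝ}

lemma Wk_nonneg
    (hs : ∀ i ∈ range d, ∀ j ∈ range d, 0 ≤ s i j)
    (hrow : ∀ i ∈ range d, ∑ j ∈ range d, s i j = 1)
    (hcol : ∀ j ∈ range d, ∑ i ∈ range d, s i j = 1)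
    (hr : ∀ ⦃m n : ℕ⦄, m ≤ n → n < d → r n ≤ r m) (k : ℕ) :
    0 ≤ ∑ i ∈ range d, (if k ≤ i then ((∑ j ∈ range d, s i j * r j) - r i) else 0) := by
  classical
  set c : ℕ → ℝ := fun j => ∑ i ∈ range d, (if k ≤ i then s i j else 0) with hc
  set χ : ℕ → ℝ := fun j => if k ≤ j then (1:ℝ) else 0 with hχ
  have hc_nonneg : ∀ j ∈ range d, 0 ≤ c j := by
    intro j hj
    refine Finset.sum_nonneg fun i hi => ?_
    split
    · exact hs i hi j hj
    · exact le_refl 0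
  have hc_le_one : ∀ j ∈ range d, c j ≤ 1 := by
    intro j hj
    rw [hc]
    calc (∑ i ∈ range d, if k ≤ i then s i j else 0) ≤ ∑ i ∈ range d, s i j := by
          refine Finset.sum_le_sum fun i hi => ?_
          split
          · exact le_refl _
          · exact hs i hi j hj
      _ = 1 := hcol j hj
  have hsum_c : ∑ j ∈ range d, c j = ∑ i ∈ range d, (if k ≤ i then (1:ℝ) else 0) := by
    rw [hc, Finset.sum_comm]
    refine Finset.sum_congr rfl fun i _ => ?_
    by_cases h : k ≤ i
    · simp only [h, if_true]; exact hrow i ‹i ∈ range d›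
    · simp [h]
  -- rewrite the goal sum
  have main : ∑ i ∈ range d, (if k ≤ i then ((∑ j ∈ range d, s i j * r j) - r i) else 0)
      = ∑ j ∈ range d, (c j - χ j) * r j := by
    have h1 : ∀ i, (if k ≤ i then ((∑ j ∈ range d, s i j * r j) - r i) else 0)
        = (if k ≤ i then (∑ j ∈ range d, s i j * r j) else 0) - χ i * r i := by
      intro i; rw [hχ]; by_cases h : k ≤ i <;> simp [h]
    simp only [h1]
    rw [Finset.sum_sub_distrib]
    have h2 : ∑ i ∈ range d, (if k ≤ i then (∑ j ∈ range d, s i j * r j) else 0)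
        = ∑ j ∈ range d, c j * r j := by
      have h3 : ∀ i, (if k ≤ i then (∑ j ∈ range d, s i j * r j) else 0)
          = ∑ j ∈ range d, (if k ≤ i then s i j else 0) * r j := by
        intro i; split <;> simp
      simp only [h3]
      rw [Finset.sum_comm]
      refine Finset.sum_congr rfl fun j _ => ?_
      rw [hc, Finset.sum_mul]
    rw [h2, ← Finset.sum_sub_distrib]
    exact Finset.sum_congr rfl fun j _ => by ring
  rw [main]
  rw [telescope d (fun j => c j - χ j) r]
  have hzero : ∑ j ∈ range d, (c j - χ j) = 0 := by
    rw [Finset.sum_sub_distrib, hsum_c, hχ]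
    simp
  rw [hzero, mul_zero, zero_add]
  refine Finset.sum_nonneg fun l hl => ?_
  rw [mem_range] at hl
  have hrl : r l - r (l-1) ≤ 0 := sub_nonpos.2 (hr (Nat.sub_le l 1) hl)
  have hV : (∑ j ∈ range d, if l ≤ j then c j - χ j else 0) ≤ 0 := by
    have hsplit : ∀ j, (if l ≤ j then c j - χ j else 0)
        = (if l ≤ j then c j else 0) - (if l ≤ j then χ j else 0) := by
      intro j; split <;> simp
    simp only [hsplit]
    rw [Finset.sum_sub_distrib, sub_nonpos]
    by_cases hkl : k ≤ l
    · have hQ : ∀ j, (if l ≤ j then χ j else 0) = if l ≤ j then (1:ℝ) else 0 := by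
        intro j; rw [hχ]
        by_cases h : l ≤ j
        · simp [h, le_trans hkl h]
        · simp [h]
      simp only [hQ]
      refine Finset.sum_le_sum fun j hj => ?_
      by_cases h : l ≤ j
      · simp only [h, if_true]; exact hc_le_one j hj
      · simp [h]
    · have hlk : l ≤ k := le_of_not_ge hkl
      have hQ : ∀ j, (if l ≤ j then χ j else 0) = if k ≤ j then (1:ℝ) else 0 := by
        intro j; rw [hχ]
        by_cases h : k ≤ j
        · simp [h, le_trans hlk h]
        · by_cases h' : l ≤ j <;> simp [h, h']
      simp only [hQ]
      calc (∑ j ∈ range d, if l ≤ j then c j else 0) ≤ ∑ j ∈ range d, c j := by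
            refine Finset.sum_le_sum fun j hj => ?_
            split
            · exact le_refl _
            · exact hc_nonneg j hj
        _ = ∑ j ∈ range d, (if k ≤ j then (1:ℝ) else 0) := hsum_c
  nlinarith [mul_nonneg (neg_nonneg.2 hrl) (neg_nonneg.2 hV)]

end Core

section Core
variable {d : ℕ} {s : ℕ → ℕ → ℝ} {e r : ℕ → ℝ}

def stepE (k : ℕ) : ℕ → ℝ := fun i => if k ≤ i then 1 else 0
def stepR (l : ℕ) : ℕ → ℝ := fun j => if j < l then 1 else 0

lemma stepE_mono (k : ℕ) : ∀ ⦃m n : ℕ⦄, m ≤ n → n < d → stepE k m ≤ stepE k n := by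
  intro m n hmn _; unfold stepE
  by_cases h : k ≤ m
  · simp [h, le_trans h hmn]
  · by_cases h' : k ≤ n <;> simp [h, h']

lemma stepR_anti (l : ℕ) : ∀ ⦃m n : ℕ⦄, m ≤ n → n < d → stepR l n ≤ stepR l m := by
  intro m n hmn _; unfold stepR
  by_cases h : n < l
  · simp [h, lt_of_le_of_lt hmn h]
  · by_cases h' : m < l <;> simp [h, h']

lemma slack_nonneg
    (hs : ∀ i ∈ range d, ∀ j ∈ range d, 0 ≤ s i j)
    (hrow : ∀ i ∈ range d, ∑ j ∈ range d, s i j = 1)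
    (hcol : ∀ j ∈ range d, ∑ i ∈ range d, s i j = 1)
    (he : ∀ ⦃m n : ℕ⦄, m ≤ n → n < d → e m ≤ e n)
    (hr : ∀ ⦃m n : ℕ⦄, m ≤ n → n < d → r n ≤ r m) :
    0 ≤ Slack d s e r := by
  have conv1 : Slack d s e r
      = ∑ i ∈ range d, ((∑ j ∈ range d, s i j * r j) - r i) * e i := by
    unfold Slack; exact Finset.sum_congr rfl fun i _ => mul_comm _ _
  rw [conv1, telescope d (fun i => (∑ j ∈ range d, s i j * r j) - r i) e]
  have hzero : ∑ i ∈ range d, ((∑ j ∈ range d, s i j * r j) - r i) = 0 := by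
    rw [Finset.sum_sub_distrib, sub_eq_zero, Finset.sum_comm]
    refine Finset.sum_congr rfl fun j hj => ?_
    rw [← Finset.sum_mul, hcol j hj, one_mul]
  rw [hzero, mul_zero, zero_add]
  refine Finset.sum_nonneg fun k hk => ?_
  rw [mem_range] at hk
  exact mul_nonneg (sub_nonneg.2 (he (Nat.sub_le k 1) hk)) (Wk_nonneg hs hrow hcol hr k)

lemma slack_step_zero
    (hs : ∀ i ∈ range d, ∀ j ∈ range d, 0 ≤ s i j)
    (hrow : ∀ i ∈ range d, ∑ j ∈ range d, s i j = 1)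
    (hcol : ∀ j ∈ range d, ∑ i ∈ range d, s i j = 1)
    (he : ∀ ⦃m n : ℕ⦄, m ≤ n → n < d → e m ≤ e n)
    (hr : ∀ ⦃m n : ℕ⦄, m ≤ n → n < d → r n ≤ r m)
    (hslack : Slack d s e r = 0) {k l : ℕ} (hk : k < d) (hl : l < d)
    (hek : e (k-1) < e k) (hrl : r l < r (l-1)) :
    Slack d s (stepE k) (stepR l) = 0 := by
  have hk0 : 1 ≤ k := by
    by_contra h
    push_neg at h
    interval_cases k
    · simp at hek
  have hl0 : 1 ≤ l := by
    by_contra h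
    push_neg at h
    interval_cases l
    · simp at hrl
  -- first: Slack s (stepE k) r = 0
  have step1 : Slack d s (stepE k) r = 0 := by
    set δ : ℝ := e k - e (k-1) with hδ
    have hδpos : 0 < δ := sub_pos.2 hek
    have he' : ∀ ⦃m n : ℕ⦄, m ≤ n → n < d → (e m - δ * stepE k m) ≤ (e n - δ * stepE k n) := by
      intro m n hmn hn
      unfold stepE
      by_cases hm' : k ≤ m
      · simp only [hm', if_true, le_trans hm' hmn, mul_one]
        have := he hmn hn
        linarith
      · by_cases hn' : k ≤ n
        · simp only [hm', if_false, hn', if_true, mul_zero, mul_one, sub_zero]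
          have h1 : e m ≤ e (k-1) := he (by omega) (by omega)
          have h2 : e k ≤ e n := he hn' hn
          linarith
        · simp only [hm', hn', if_false, mul_zero, sub_zero]
          exact he hmn hn
    have hineq : 0 ≤ Slack d s (fun i => e i - δ * stepE k i) r :=
      slack_nonneg hs hrow hcol he' hr
    rw [Slack_sub_smul, hslack, zero_sub] at hineq
    have h1 : Slack d s (stepE k) r ≤ 0 := by nlinarith
    have h2 : 0 ≤ Slack d s (stepE k) r := slack_nonneg hs hrow hcol (stepE_mono k) hr
    linarith
  -- second: Slack s (stepE k) (stepR l) = 0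
  set γ : ℝ := r (l-1) - r l with hγ
  have hγpos : 0 < γ := sub_pos.2 hrl
  have hr' : ∀ ⦃m n : ℕ⦄, m ≤ n → n < d → (r n - γ * stepR l n) ≤ (r m - γ * stepR l m) := by
    intro m n hmn hn
    unfold stepR
    by_cases hn' : n < l
    · simp only [hn', if_true, lt_of_le_of_lt hmn hn', mul_one]
      have := hr hmn hn
      linarith
    · by_cases hm' : m < l
      · simp only [hn', if_false, hm', if_true, mul_zero, mul_one, sub_zero]
        have h1 : r (l-1) ≤ r m := hr (by omega) (by omega)
        have h2 : r n ≤ r l := hr (by omega) hn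
        linarith
      · simp only [hn', hm', if_false, mul_zero, sub_zero]
        exact hr hmn hn
  have hineq : 0 ≤ Slack d s (stepE k) (fun j => r j - γ * stepR l j) :=
    slack_nonneg hs hrow hcol (stepE_mono k) hr'
  rw [Slack_sub_smul_right, step1, zero_sub] at hineq
  have h1 : Slack d s (stepE k) (stepR l) ≤ 0 := by nlinarith
  have h2 : 0 ≤ Slack d s (stepE k) (stepR l) :=
    slack_nonneg hs hrow hcol (stepE_mono k) (stepR_anti l)
  linarith

end Core

section Core
variable {d : ℕ} {s : ℕ → ℕ → ℝ} {e r : ℕ → ℝ}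

lemma count_lt {l : ℕ} (hld : l ≤ d) :
    ∑ j ∈ range d, (if j < l then (1:ℝ) else 0) = l := by
  rw [← Finset.sum_filter]
  have h : (range d).filter (fun j => j < l) = range l := by
    ext x; simp only [mem_filter, mem_range]; omega
  rw [h, Finset.sum_const, card_range, nsmul_eq_mul, mul_one]

lemma count_Ico {k l : ℕ} (hld : l ≤ d) :
    ∑ i ∈ range d, stepE k i * stepR l i = (l - k : ℕ) := by
  have h1 : ∀ i, stepE k i * stepR l i = if (k ≤ i ∧ i < l) then (1:ℝ) else 0 := by
    intro i; unfold stepE stepR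
    by_cases h : k ≤ i <;> by_cases h' : i < l <;> simp [h, h']
  simp only [h1]
  rw [← Finset.sum_filter]
  have h : (range d).filter (fun i => k ≤ i ∧ i < l) = Finset.Ico k l := by
    ext x; simp only [mem_filter, mem_range, Finset.mem_Ico]; omega
  rw [h, Finset.sum_const, Nat.card_Ico, nsmul_eq_mul, mul_one]

/-- vanishing rectangle, case `l ≤ k`. -/
lemma vanish1
    (hs : ∀ i ∈ range d, ∀ j ∈ range d, 0 ≤ s i j)
    (hS : Slack d s (stepE k) (stepR l) = 0) (hlk : l ≤ k) :
    ∀ i ∈ range d, k ≤ i → ∀ j ∈ range d, j < l → s i j = 0 := by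
  have hcross : ∑ i ∈ range d, stepE k i * stepR l i = 0 := by
    refine Finset.sum_eq_zero fun i _ => ?_
    unfold stepE stepR
    by_cases h : k ≤ i <;> by_cases h' : i < l <;> simp [h, h'] <;> omega
  rw [Slack_eq, hcross, sub_zero] at hS
  have hnn : ∀ i ∈ range d, (0:ℝ) ≤ ∑ j ∈ range d, stepE k i * stepR l j * s i j := by
    intro i hi
    refine Finset.sum_nonneg fun j hj => ?_
    unfold stepE stepR
    by_cases h : k ≤ i <;> by_cases h' : j < l <;>
      simp [h, h', hs i hi j hj]
  intro i hi hki j hj hjl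
  have h1 := (Finset.sum_eq_zero_iff_of_nonneg hnn).1 hS i hi
  have hnn2 : ∀ j ∈ range d, (0:ℝ) ≤ stepE k i * stepR l j * s i j := by
    intro j' hj'
    unfold stepE stepR
    by_cases h : k ≤ i <;> by_cases h' : j' < l <;> simp [h, h', hs i hi j' hj']
  have h2 := (Finset.sum_eq_zero_iff_of_nonneg hnn2).1 h1 j hj
  unfold stepE stepR at h2
  simp only [hki, if_true, hjl, one_mul] at h2
  exact h2

/-- vanishing rectangle, case `k ≤ l`. -/
lemma vanish2
    (hs : ∀ i ∈ range d, ∀ j ∈ range d, 0 ≤ s i j)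
    (hrow : ∀ i ∈ range d, ∑ j ∈ range d, s i j = 1)
    (hcol : ∀ j ∈ range d, ∑ i ∈ range d, s i j = 1)
    (hS : Slack d s (stepE k) (stepR l) = 0) (hkl : k ≤ l) (hld : l ≤ d) :
    ∀ i ∈ range d, i < k → ∀ j ∈ range d, l ≤ j → s i j = 0 := by
  -- A = ∑_{i≥k,j<l} s ; from hS : A = l - k
  have hA : ∑ i ∈ range d, ∑ j ∈ range d, stepE k i * stepR l j * s i j = (l - k : ℕ) := by
    rw [Slack_eq] at hS
    rw [sub_eq_zero] at hS
    rw [hS, count_Ico hld]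
  -- total over j<l : ∑_{i,j<l} s = l
  have hTot : ∑ i ∈ range d, ∑ j ∈ range d, stepR l j * s i j = (l:ℝ) := by
    rw [Finset.sum_comm]
    have h1 : ∀ j ∈ range d, ∑ i ∈ range d, stepR l j * s i j = stepR l j := by
      intro j hj
      rw [← Finset.mul_sum, hcol j hj, mul_one]
    rw [Finset.sum_congr rfl h1]
    unfold stepR
    exact count_lt hld
  -- hence ∑_{i<k, j<l} s = k
  have hBelow : ∑ i ∈ range d, ∑ j ∈ range d, (1 - stepE k i) * stepR l j * s i j = (k:ℝ) := by
    have expand : ∀ i ∈ range d, ∀ j ∈ range d,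
        (1 - stepE k i) * stepR l j * s i j
          = stepR l j * s i j - stepE k i * stepR l j * s i j := by
      intro i _ j _; ring
    have : ∑ i ∈ range d, ∑ j ∈ range d, (1 - stepE k i) * stepR l j * s i j
        = (∑ i ∈ range d, ∑ j ∈ range d, stepR l j * s i j)
          - ∑ i ∈ range d, ∑ j ∈ range d, stepE k i * stepR l j * s i j := by
      rw [← Finset.sum_sub_distrib]
      refine Finset.sum_congr rfl fun i hi => ?_
      rw [← Finset.sum_sub_distrib]
      exact Finset.sum_congr rfl fun j hj => by ring
    rw [this, hA, hTot]
    have : (l:ℝ) - (l - k : ℕ) = k := by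
      have : (l - k : ℕ) = (l:ℝ) - k := by
        push_cast [Nat.cast_sub hkl]; ring
      rw [this]; ring
    exact this
  -- row sums over i<k : ∑_{i<k, all j} s = k
  have hRow : ∑ i ∈ range d, ∑ j ∈ range d, (1 - stepE k i) * s i j = (k:ℝ) := by
    have h1 : ∀ i ∈ range d, ∑ j ∈ range d, (1 - stepE k i) * s i j = (1 - stepE k i) := by
      intro i hi
      rw [← Finset.mul_sum, hrow i hi, mul_one]
    rw [Finset.sum_congr rfl h1]
    have h2 : ∀ i, (1:ℝ) - stepE k i = if i < k then 1 else 0 := by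
      intro i; unfold stepE
      by_cases h : k ≤ i
      · simp [h, show ¬ i < k by omega]
      · simp [h, show i < k by omega]
    simp only [h2]
    exact count_lt (le_trans hkl hld)
  -- difference : ∑_{i<k, j≥l} s = 0
  have hZero : ∑ i ∈ range d, ∑ j ∈ range d, (1 - stepE k i) * (1 - stepR l j) * s i j = 0 := by
    have : ∑ i ∈ range d, ∑ j ∈ range d, (1 - stepE k i) * (1 - stepR l j) * s i j
        = (∑ i ∈ range d, ∑ j ∈ range d, (1 - stepE k i) * s i j)
          - ∑ i ∈ range d, ∑ j ∈ range d, (1 - stepE k i) * stepR l j * s i j := by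
      rw [← Finset.sum_sub_distrib]
      refine Finset.sum_congr rfl fun i hi => ?_
      rw [← Finset.sum_sub_distrib]
      exact Finset.sum_congr rfl fun j hj => by ring
    rw [this, hRow, hBelow, sub_self]
  have hnn : ∀ i ∈ range d, (0:ℝ) ≤ ∑ j ∈ range d, (1 - stepE k i) * (1 - stepR l j) * s i j := by
    intro i hi
    refine Finset.sum_nonneg fun j hj => ?_
    unfold stepE stepR
    by_cases h : k ≤ i <;> by_cases h' : j < l <;> simp [h, h', hs i hi j hj]
  intro i hi hik j hj hlj
  have h1 := (Finset.sum_eq_zero_iff_of_nonneg hnn).1 hZero i hi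
  have hnn2 : ∀ j' ∈ range d, (0:ℝ) ≤ (1 - stepE k i) * (1 - stepR l j') * s i j' := by
    intro j' hj'
    unfold stepE stepR
    by_cases h : k ≤ i <;> by_cases h' : j' < l <;> simp [h, h', hs i hi j' hj']
  have h2 := (Finset.sum_eq_zero_iff_of_nonneg hnn2).1 h1 j hj
  unfold stepE stepR at h2
  have hik' : ¬ k ≤ i := by omega
  have hjl' : ¬ j < l := by omega
  simp only [hik', hjl', if_false, sub_zero, one_mul] at h2
  exact h2

/-- if an antitone-on-range function strictly decreases between `a` and `b`,
there is a strict descent step. -/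
lemma exists_jump {f : ℕ → ℝ} :
    ∀ b a : ℕ, a ≤ b → f b < f a → ∃ l, a < l ∧ l ≤ b ∧ f l < f (l-1) := by
  intro b
  induction b with
  | zero =>
    intro a ha hf
    interval_cases a
    exact absurd hf (lt_irrefl _)
  | succ n ih =>
    intro a ha hf
    have hne : a ≠ n + 1 := fun h => by rw [h] at hf; exact lt_irrefl _ hf
    have ha' : a ≤ n := by omega
    by_cases h : f (n+1) < f n
    · exact ⟨n+1, by omega, le_refl _, by simpa using h⟩
    · push_neg at h
      rcases ih a ha' (lt_of_le_of_lt h hf) with ⟨l, h1, h2, h3⟩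
      exact ⟨l, h1, by omega, h3⟩

end Core

section Spectral
variable {d : ℕ}

noncomputable def permMat (σ : Equiv.Perm (Fin d)) : Matrix (Fin d) (Fin d) ℂ :=
  Matrix.of fun i j => if i = σ j then 1 else 0

lemma permMat_mem (σ : Equiv.Perm (Fin d)) : permMat σ ∈ Matrix.unitaryGroup (Fin d) ℂ := by
  rw [Matrix.mem_unitaryGroup_iff]
  ext i k
  rw [Matrix.mul_apply, Matrix.one_apply]
  simp only [Matrix.star_apply, permMat, Matrix.of_apply, apply_ite (star : ℂ → ℂ), star_one, star_zero]
  rw [Finset.sum_eq_single (σ⁻¹ i)]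
  · simp only [Equiv.Perm.inv_def, Equiv.apply_symm_apply]
    by_cases h : i = k
    · simp [h]
    · have : ¬ k = i := fun hh => h hh.symm
      simp [h, this]
  · intro b _ hb
    have : ¬ i = σ b := fun hh => hb (by rw [hh]; simp)
    simp [this]
  · intro h
    exact absurd (Finset.mem_univ _) h

lemma permMat_conj (σ : Equiv.Perm (Fin d)) (w : Fin d → ℂ) :
    permMat σ * Matrix.diagonal (fun j => w (σ j)) * (permMat σ)ᴴ = Matrix.diagonal w := by
  ext i k
  rw [Matrix.mul_apply]
  simp only [Matrix.mul_diagonal, Matrix.conjTranspose_apply, permMat, Matrix.of_apply,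
    apply_ite (star : ℂ → ℂ), star_one, star_zero]
  rw [Finset.sum_eq_single (σ⁻¹ i)]
  · simp only [Equiv.Perm.inv_def, Equiv.apply_symm_apply]
    by_cases h : i = k
    · subst h; simp [Matrix.diagonal_apply_eq]
    · have : ¬ k = i := fun hh => h hh.symm
      simp [h, this, Matrix.diagonal_apply_ne _ h]
  · intro b _ hb
    have : ¬ i = σ b := fun hh => hb (by rw [hh]; simp)
    simp [this]
  · intro h
    exact absurd (Finset.mem_univ _) h

lemma conj_perm {A U : Matrix (Fin d) (Fin d) ℂ} (hU : U ∈ Matrix.unitaryGroup (Fin d) ℂ)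
    (a : Fin d → ℝ) (σ : Equiv.Perm (Fin d))
    (hA : A = U * Matrix.diagonal (fun i => (a i : ℂ)) * Uᴴ) :
    A = (U * permMat σ) * Matrix.diagonal (fun i => (a (σ i) : ℂ)) * (U * permMat σ)ᴴ := by
  have h := permMat_conj σ (fun i => (a i : ℂ))
  rw [conjTranspose_mul]
  calc A = U * (permMat σ * Matrix.diagonal (fun j => (a (σ j) : ℂ)) * (permMat σ)ᴴ) * Uᴴ := by
        rw [h]; exact hA
    _ = U * permMat σ * Matrix.diagonal (fun i => (a (σ i) : ℂ)) * ((permMat σ)ᴴ * Uᴴ) := by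
        noncomm_ring

lemma exists_spectral_mono {A : Matrix (Fin d) (Fin d) ℂ} (hA : A.IsHermitian) :
    ∃ U ∈ Matrix.unitaryGroup (Fin d) ℂ, ∃ a : Fin d → ℝ, Monotone a ∧
      A = U * Matrix.diagonal (fun i => (a i : ℂ)) * Uᴴ := by
  have spec : A = (hA.eigenvectorUnitary : Matrix (Fin d) (Fin d) ℂ)
      * Matrix.diagonal (fun i => ((hA.eigenvalues i : ℝ) : ℂ))
      * (hA.eigenvectorUnitary : Matrix (Fin d) (Fin d) ℂ)ᴴ := by
    have := hA.spectral_theorem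
    simp only [Unitary.conjStarAlgAut_apply, Unitary.coe_star] at this
    rw [← Matrix.star_eq_conjTranspose]
    exact this
  set σ := Tuple.sort hA.eigenvalues with hσ
  refine ⟨(hA.eigenvectorUnitary : Matrix (Fin d) (Fin d) ℂ) * permMat σ,
    mul_mem hA.eigenvectorUnitary.2 (permMat_mem σ),
    hA.eigenvalues ∘ σ, Tuple.monotone_sort _, ?_⟩
  exact conj_perm hA.eigenvectorUnitary.2 hA.eigenvalues σ spec

lemma exists_spectral_anti {A : Matrix (Fin d) (Fin d) ℂ} (hA : A.IsHermitian) :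
    ∃ U ∈ Matrix.unitaryGroup (Fin d) ℂ, ∃ a : Fin d → ℝ, Antitone a ∧
      A = U * Matrix.diagonal (fun i => (a i : ℂ)) * Uᴴ := by
  obtain ⟨U, hU, a, ha, hAeq⟩ := exists_spectral_mono hA
  refine ⟨U * permMat (Fin.revPerm), mul_mem hU (permMat_mem _),
    a ∘ Fin.revPerm, ?_, conj_perm hU a Fin.revPerm hAeq⟩
  intro i j hij
  exact ha (by simpa using Fin.rev_le_rev.2 hij)

end Spectral

section Bridge
variable {d : ℕ}

/-- extension of a `Fin d` tuple to `ℕ`. -/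
noncomputable def eOf (e : Fin d → ℝ) : ℕ → ℝ := fun n => if h : n < d then e ⟨n, h⟩ else 0

/-- `|M i j|²` as a function on `ℕ`. -/
noncomputable def sOf (M : Matrix (Fin d) (Fin d) ℂ) : ℕ → ℕ → ℝ := fun m n =>
  if h : m < d ∧ n < d then Complex.normSq (M ⟨m, h.1⟩ ⟨n, h.2⟩) else 0

lemma eOf_val (e : Fin d → ℝ) (i : Fin d) : eOf e i.val = e i := by
  unfold eOf; rw [dif_pos i.isLt]

lemma sOf_val (M : Matrix (Fin d) (Fin d) ℂ) (i j : Fin d) :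
    sOf M i.val j.val = Complex.normSq (M i j) := by
  unfold sOf; rw [dif_pos ⟨i.isLt, j.isLt⟩]

lemma eOf_mono {e : Fin d → ℝ} (he : Monotone e) :
    ∀ ⦃m n : ℕ⦄, m ≤ n → n < d → eOf e m ≤ eOf e n := by
  intro m n hmn hn
  unfold eOf
  rw [dif_pos hn, dif_pos (lt_of_le_of_lt hmn hn)]
  exact he hmn

lemma eOf_anti {r : Fin d → ℝ} (hr : Antitone r) :
    ∀ ⦃m n : ℕ⦄, m ≤ n → n < d → eOf r n ≤ eOf r m := by
  intro m n hmn hn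
  unfold eOf
  rw [dif_pos hn, dif_pos (lt_of_le_of_lt hmn hn)]
  exact hr hmn

lemma sOf_nonneg (M : Matrix (Fin d) (Fin d) ℂ) :
    ∀ i ∈ range d, ∀ j ∈ range d, 0 ≤ sOf M i j := by
  intro i _ j _
  unfold sOf
  split
  · exact Complex.normSq_nonneg _
  · exact le_refl 0

lemma row_normSq {M : Matrix (Fin d) (Fin d) ℂ} (hM : M ∈ Matrix.unitaryGroup (Fin d) ℂ)
    (i : Fin d) : ∑ j : Fin d, Complex.normSq (M i j) = 1 := by
  have h1 : (M * star M) i i = 1 := by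
    rw [Matrix.mem_unitaryGroup_iff.mp hM, Matrix.one_apply_eq]
  rw [Matrix.mul_apply] at h1
  have h2 : ∀ j, M i j * (star M) j i = ((Complex.normSq (M i j) : ℝ) : ℂ) := by
    intro j
    rw [Matrix.star_apply, Complex.star_def, Complex.mul_conj]
  rw [Finset.sum_congr rfl fun j _ => h2 j, ← Complex.ofReal_sum] at h1
  exact_mod_cast h1

lemma col_normSq {M : Matrix (Fin d) (Fin d) ℂ} (hM : M ∈ Matrix.unitaryGroup (Fin d) ℂ)
    (j : Fin d) : ∑ i : Fin d, Complex.normSq (M i j) = 1 := by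
  have h1 : (star M * M) j j = 1 := by
    rw [Matrix.mem_unitaryGroup_iff'.mp hM, Matrix.one_apply_eq]
  rw [Matrix.mul_apply] at h1
  have h2 : ∀ i, (star M) j i * M i j = ((Complex.normSq (M i j) : ℝ) : ℂ) := by
    intro i
    rw [Matrix.star_apply, Complex.star_def, mul_comm, Complex.mul_conj]
  rw [Finset.sum_congr rfl fun i _ => h2 i, ← Complex.ofReal_sum] at h1
  exact_mod_cast h1

lemma sOf_row {M : Matrix (Fin d) (Fin d) ℂ} (hM : M ∈ Matrix.unitaryGroup (Fin d) ℂ) :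
    ∀ i ∈ range d, ∑ j ∈ range d, sOf M i j = 1 := by
  intro m hm
  rw [mem_range] at hm
  have conv1 : ∑ j ∈ range d, sOf M m j = ∑ j : Fin d, sOf M m j.val :=
    (Fin.sum_univ_eq_sum_range (fun n => sOf M m n) d).symm
  rw [conv1]
  have conv2 : ∀ j : Fin d, sOf M m j.val = Complex.normSq (M ⟨m, hm⟩ j) := by
    intro j
    unfold sOf
    rw [dif_pos ⟨hm, j.isLt⟩]
  rw [Finset.sum_congr rfl fun j _ => conv2 j]
  exact row_normSq hM _

lemma sOf_col {M : Matrix (Fin d) (Fin d) ℂ} (hM : M ∈ Matrix.unitaryGroup (Fin d) ℂ) :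
    ∀ j ∈ range d, ∑ i ∈ range d, sOf M i j = 1 := by
  intro n hn
  rw [mem_range] at hn
  have conv1 : ∑ i ∈ range d, sOf M i n = ∑ i : Fin d, sOf M i.val n :=
    (Fin.sum_univ_eq_sum_range (fun m => sOf M m n) d).symm
  rw [conv1]
  have conv2 : ∀ i : Fin d, sOf M i.val n = Complex.normSq (M i ⟨n, hn⟩) := by
    intro i
    unfold sOf
    rw [dif_pos ⟨i.isLt, hn⟩]
  rw [Finset.sum_congr rfl fun i _ => conv2 i]
  exact col_normSq hM _

/-- The slack in `Fin` terms. -/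
lemma slack_fin (M : Matrix (Fin d) (Fin d) ℂ) (e r : Fin d → ℝ) :
    Slack d (sOf M) (eOf e) (eOf r)
      = (∑ i : Fin d, ∑ j : Fin d, e i * r j * Complex.normSq (M i j))
        - ∑ i : Fin d, e i * r i := by
  rw [Slack_eq]
  congr 1
  · rw [← Fin.sum_univ_eq_sum_range (fun m => ∑ j ∈ range d, eOf e m * eOf r j * sOf M m j) d]
    refine Finset.sum_congr rfl fun i _ => ?_
    rw [← Fin.sum_univ_eq_sum_range (fun n => eOf e i.val * eOf r n * sOf M i.val n) d]
    refine Finset.sum_congr rfl fun j _ => ?_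
    rw [eOf_val, eOf_val, sOf_val]
  · rw [← Fin.sum_univ_eq_sum_range (fun m => eOf e m * eOf r m) d]
    exact Finset.sum_congr rfl fun i _ => by rw [eOf_val, eOf_val]

end Bridge

section Blocks
open scoped Classical
variable {d : ℕ}

noncomputable def blk (e : Fin d → ℝ) (i : Fin d) : Finset (Fin d) :=
  univ.filter (fun x => e x = e i)

lemma mem_blk {e : Fin d → ℝ} {i x : Fin d} : x ∈ blk e i ↔ e x = e i := by
  unfold blk; simp

lemma blk_nonempty (e : Fin d → ℝ) (i : Fin d) : (blk e i).Nonempty :=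
  ⟨i, mem_blk.2 rfl⟩

noncomputable def amin (e : Fin d → ℝ) (i : Fin d) : Fin d :=
  (blk e i).min' (blk_nonempty e i)

noncomputable def bmax (e : Fin d → ℝ) (i : Fin d) : Fin d :=
  (blk e i).max' (blk_nonempty e i)

lemma amin_le (e : Fin d → ℝ) (i : Fin d) : amin e i ≤ i :=
  Finset.min'_le _ _ (mem_blk.2 rfl)

lemma le_bmax (e : Fin d → ℝ) (i : Fin d) : i ≤ bmax e i :=
  Finset.le_max' _ _ (mem_blk.2 rfl)

lemma e_amin (e : Fin d → ℝ) (i : Fin d) : e (amin e i) = e i :=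
  mem_blk.1 (Finset.min'_mem _ _)

lemma e_bmax (e : Fin d → ℝ) (i : Fin d) : e (bmax e i) = e i :=
  mem_blk.1 (Finset.max'_mem _ _)

lemma blk_congr {e : Fin d → ℝ} {i i' : Fin d} (h : e i = e i') : blk e i = blk e i' := by
  unfold blk; ext x; simp [h]

lemma amin_congr {e : Fin d → ℝ} {i i' : Fin d} (h : e i = e i') : amin e i = amin e i' := by
  unfold amin; congr 1; exact blk_congr h

lemma bmax_congr {e : Fin d → ℝ} {i i' : Fin d} (h : e i = e i') : bmax e i = bmax e i' := by
  unfold bmax; congr 1; exact blk_congr h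

end Blocks

section Vanish
variable {d : ℕ} {e r : Fin d → ℝ} {M : Matrix (Fin d) (Fin d) ℂ}

lemma MS1 (he : Monotone e) (hr : Antitone r) (hM : M ∈ Matrix.unitaryGroup (Fin d) ℂ)
    (hslack : Slack d (sOf M) (eOf e) (eOf r) = 0)
    {i j : Fin d} (hj : r (amin e i) < r j) : M i j = 0 := by
  set a := amin e i with ha
  have hja : j < a := by
    by_contra h
    push_neg at h
    exact absurd (hr h) (not_le.2 hj)
  have ha0 : 0 < a.val := by
    by_contra h
    push_neg at h
    have : a ≤ j := by
      rw [Fin.le_def]; omega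
    exact absurd (hr this) (not_le.2 hj)
  have ham1 : a.val - 1 < d := lt_of_le_of_lt (Nat.sub_le _ _) a.isLt
  have hek : eOf e (a.val - 1) < eOf e a.val := by
    unfold eOf
    rw [dif_pos ham1, dif_pos a.isLt]
    have hle : e ⟨a.val - 1, ham1⟩ ≤ e ⟨a.val, a.isLt⟩ := he (by simp [Fin.le_def])
    rcases lt_or_eq_of_le hle with h | h
    · exact h
    · exfalso
      have hmem : (⟨a.val - 1, ham1⟩ : Fin d) ∈ blk e i := by
        rw [mem_blk]
        rw [show (⟨a.val, a.isLt⟩ : Fin d) = a from Fin.eta a a.isLt] at h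
        rw [h, ha]
        exact e_amin e i
      have h2 : a ≤ (⟨a.val - 1, ham1⟩ : Fin d) := Finset.min'_le _ _ hmem
      rw [Fin.le_def] at h2
      simp at h2
      omega
  obtain ⟨l, hjl, hla, hjump⟩ := exists_jump (f := eOf r) a.val j.val (le_of_lt hja) (by
    unfold eOf
    rw [dif_pos a.isLt, dif_pos j.isLt]
    simpa [Fin.eta] using hj)
  have hld : l < d := lt_of_le_of_lt hla a.isLt
  have hstep := slack_step_zero (sOf_nonneg M) (sOf_row hM) (sOf_col hM)
    (eOf_mono he) (eOf_anti hr) hslack a.isLt hld hek hjump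
  have hvan := vanish1 (sOf_nonneg M) hstep hla i.val (mem_range.2 i.isLt)
    (by have := amin_le e i; rw [← ha] at this; rw [Fin.le_def] at this; exact this)
    j.val (mem_range.2 j.isLt) hjl
  rw [sOf_val] at hvan
  exact Complex.normSq_eq_zero.1 hvan

lemma MS2 (he : Monotone e) (hr : Antitone r) (hM : M ∈ Matrix.unitaryGroup (Fin d) ℂ)
    (hslack : Slack d (sOf M) (eOf e) (eOf r) = 0)
    {i j : Fin d} (hj : r j < r (bmax e i)) : M i j = 0 := by
  set b := bmax e i with hb
  have hbj : b < j := by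
    by_contra h
    push_neg at h
    exact absurd (hr h) (not_le.2 hj)
  have hk : b.val + 1 < d := by
    have := Fin.lt_def.1 hbj
    omega
  have hek : eOf e (b.val + 1 - 1) < eOf e (b.val + 1) := by
    unfold eOf
    rw [dif_pos (show b.val + 1 - 1 < d by omega), dif_pos hk]
    have hle : e ⟨b.val + 1 - 1, show b.val + 1 - 1 < d by omega⟩ ≤ e ⟨b.val + 1, hk⟩ :=
      he (by simp [Fin.le_def])
    rcases lt_or_eq_of_le hle with h | h
    · exact h
    · exfalso
      have hbeq : (⟨b.val + 1 - 1, show b.val + 1 - 1 < d by omega⟩ : Fin d) = b := by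
        apply Fin.ext; simp
      rw [hbeq] at h
      have hmem : (⟨b.val + 1, hk⟩ : Fin d) ∈ blk e i := by
        rw [mem_blk, ← h, hb]
        exact e_bmax e i
      have h2 : (⟨b.val + 1, hk⟩ : Fin d) ≤ b := Finset.le_max' _ _ hmem
      rw [Fin.le_def] at h2
      simp at h2
  obtain ⟨l, hbl, hlj, hjump⟩ := exists_jump (f := eOf r) j.val b.val (by
      have := Fin.lt_def.1 hbj; omega) (by
    unfold eOf
    rw [dif_pos j.isLt, dif_pos b.isLt]
    simpa [Fin.eta] using hj)
  have hld : l < d := lt_of_le_of_lt hlj j.isLt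
  have hstep := slack_step_zero (sOf_nonneg M) (sOf_row hM) (sOf_col hM)
    (eOf_mono he) (eOf_anti hr) hslack hk hld hek hjump
  have hvan := vanish2 (sOf_nonneg M) (sOf_row hM) (sOf_col hM) hstep
    (by omega) (le_of_lt hld) i.val (mem_range.2 i.isLt)
    (by
      have h2 : i.val ≤ b.val := Fin.le_def.1 (le_bmax e i)
      omega)
    j.val (mem_range.2 j.isLt) hlj
  rw [sOf_val] at hvan
  exact Complex.normSq_eq_zero.1 hvan

end Vanish

section BlockDiag
variable {d : ℕ} {e r : Fin d → ℝ} {M : Matrix (Fin d) (Fin d) ℂ}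

lemma diag_herm (r : Fin d → ℝ) :
    (Matrix.diagonal (fun i => (r i : ℂ))).IsHermitian :=
  Matrix.isHermitian_diagonal_of_self_adjoint _ (by
    funext i
    simp [Pi.star_apply, Complex.star_def, Complex.conj_ofReal])

lemma Bapply (M : Matrix (Fin d) (Fin d) ℂ) (r : Fin d → ℝ) (i i' : Fin d) :
    (M * Matrix.diagonal (fun x => (r x : ℂ)) * Mᴴ) i i'
      = ∑ j : Fin d, M i j * (r j : ℂ) * star (M i' j) := by
  rw [Matrix.mul_apply]
  refine Finset.sum_congr rfl fun j _ => ?_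
  rw [Matrix.mul_diagonal, Matrix.conjTranspose_apply]

lemma rowOrtho (hM : M ∈ Matrix.unitaryGroup (Fin d) ℂ) (i i' : Fin d) :
    ∑ j : Fin d, M i j * star (M i' j) = if i = i' then 1 else 0 := by
  have h1 : (M * star M) i i' = (1 : Matrix (Fin d) (Fin d) ℂ) i i' := by
    rw [Matrix.mem_unitaryGroup_iff.mp hM]
  rw [Matrix.mul_apply] at h1
  rw [← Matrix.one_apply (i := i) (j := i')]
  rw [← h1]
  exact Finset.sum_congr rfl fun j _ => by rw [Matrix.star_apply]

lemma BD_aux (he : Monotone e) (hr : Antitone r) (hM : M ∈ Matrix.unitaryGroup (Fin d) ℂ)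
    (hslack : Slack d (sOf M) (eOf e) (eOf r) = 0)
    {i i' : Fin d} (hlt : e i < e i') :
    (M * Matrix.diagonal (fun x => (r x : ℂ)) * Mᴴ) i i' = 0 := by
  set a' := amin e i' with ha'
  have hba : bmax e i < a' := by
    by_contra h
    push_neg at h
    have h1 : e a' ≤ e (bmax e i) := he h
    rw [ha'] at h1
    rw [e_amin e i', e_bmax e i] at h1
    exact absurd h1 (not_le.2 hlt)
  have hii' : i ≠ i' := fun h => absurd (congrArg e h) (ne_of_lt hlt)
  have key : ∀ j : Fin d, M i j * (r j : ℂ) * star (M i' j)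
      = (r a' : ℂ) * (M i j * star (M i' j)) := by
    intro j
    rcases lt_trichotomy (r j) (r a') with h | h | h
    · have hz : M i j = 0 := MS2 he hr hM hslack (lt_of_lt_of_le h (hr (le_of_lt hba)))
      rw [hz]; ring
    · rw [h]; ring
    · have hz : M i' j = 0 := MS1 he hr hM hslack (by rw [← ha']; exact h)
      rw [hz]; simp
  rw [Bapply]
  rw [Finset.sum_congr rfl fun j _ => key j, ← Finset.mul_sum, rowOrtho hM]
  simp [hii']

lemma BD (he : Monotone e) (hr : Antitone r) (hM : M ∈ Matrix.unitaryGroup (Fin d) ℂ)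
    (hslack : Slack d (sOf M) (eOf e) (eOf r) = 0)
    {i i' : Fin d} (hne : e i ≠ e i') :
    (M * Matrix.diagonal (fun x => (r x : ℂ)) * Mᴴ) i i' = 0 := by
  rcases lt_or_gt_of_ne hne with h | h
  · exact BD_aux he hr hM hslack h
  · have hB : (M * Matrix.diagonal (fun x => (r x : ℂ)) * Mᴴ).IsHermitian :=
      Matrix.isHermitian_mul_mul_conjTranspose M (diag_herm r)
    have h1 : (M * Matrix.diagonal (fun x => (r x : ℂ)) * Mᴴ) i i'
        = star ((M * Matrix.diagonal (fun x => (r x : ℂ)) * Mᴴ) i' i) := by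
      conv_lhs => rw [← hB]
      rw [Matrix.conjTranspose_apply]
    rw [h1, BD_aux he hr hM hslack h, star_zero]

end BlockDiag

section BlockSub
variable {d : ℕ}

noncomputable def mb (e : Fin d → ℝ) (v : Fin d) : ℕ := (blk e v).card

noncomputable def fe (e : Fin d → ℝ) (v : Fin d) : Fin (mb e v) → Fin d :=
  fun p => (((blk e v).orderIsoOfFin rfl) p : Fin d)

lemma fe_mem (e : Fin d → ℝ) (v : Fin d) (p : Fin (mb e v)) : fe e v p ∈ blk e v :=
  (((blk e v).orderIsoOfFin rfl) p).2

lemma fe_inj (e : Fin d → ℝ) (v : Fin d) : Function.Injective (fe e v) := by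
  intro p q h
  have := Subtype.ext h
  exact ((blk e v).orderIsoOfFin rfl).injective this

noncomputable def idxB (e : Fin d → ℝ) (v : Fin d) (x : Fin d) (hx : x ∈ blk e v) :
    Fin (mb e v) :=
  ((blk e v).orderIsoOfFin rfl).symm ⟨x, hx⟩

lemma fe_idx (e : Fin d → ℝ) (v : Fin d) (x : Fin d) (hx : x ∈ blk e v) :
    fe e v (idxB e v x hx) = x := by
  unfold fe idxB
  rw [OrderIso.apply_symm_apply]

lemma idx_fe (e : Fin d → ℝ) (v : Fin d) (p : Fin (mb e v)) :
    idxB e v (fe e v p) (fe_mem e v p) = p := by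
  unfold fe idxB
  have : (⟨(((blk e v).orderIsoOfFin rfl) p : Fin d), fe_mem e v p⟩ : {x // x ∈ blk e v})
      = ((blk e v).orderIsoOfFin rfl) p := Subtype.ext rfl
  rw [this]; exact ((blk e v).orderIsoOfFin rfl).symm_apply_apply p

lemma idx_inj (e : Fin d → ℝ) (v : Fin d) {x y : Fin d} (hx : x ∈ blk e v) (hy : y ∈ blk e v)
    (h : idxB e v x hx = idxB e v y hy) : x = y := by
  have h1 := congrArg (fe e v) h
  rwa [fe_idx, fe_idx] at h1

lemma idx_mono (e : Fin d → ℝ) (v : Fin d) {x y : Fin d} (hx : x ∈ blk e v) (hy : y ∈ blk e v)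
    (h : x ≤ y) : idxB e v x hx ≤ idxB e v y hy := by
  unfold idxB
  have : (⟨x, hx⟩ : {a // a ∈ blk e v}) ≤ ⟨y, hy⟩ := Subtype.mk_le_mk.2 h
  exact (((blk e v).orderIsoOfFin rfl).symm).monotone this

lemma sum_fe (e : Fin d → ℝ) (v : Fin d) (f : Fin d → ℂ) :
    ∑ p : Fin (mb e v), f (fe e v p) = ∑ x ∈ blk e v, f x := by
  rw [← Finset.sum_coe_sort (blk e v) f]
  exact Equiv.sum_comp (((blk e v).orderIsoOfFin rfl).toEquiv) (fun y => f y)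

end BlockSub

section BlockBound
variable {d : ℕ} {e r : Fin d → ℝ} {M : Matrix (Fin d) (Fin d) ℂ}

lemma block_bound (he : Monotone e) (hr : Antitone r)
    (hM : M ∈ Matrix.unitaryGroup (Fin d) ℂ)
    (hslack : Slack d (sOf M) (eOf e) (eOf r) = 0)
    (v : Fin d) {Nb : Matrix (Fin (mb e v)) (Fin (mb e v)) ℂ}
    (hNbU : Nb ∈ Matrix.unitaryGroup (Fin (mb e v)) ℂ)
    {β : Fin (mb e v) → ℝ}
    (hBb : (M * Matrix.diagonal (fun x => (r x : ℂ)) * Mᴴ).submatrix (fe e v) (fe e v)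
        = Nb * Matrix.diagonal (fun p => (β p : ℂ)) * Nbᴴ)
    (t : Fin (mb e v)) :
    r (bmax e v) ≤ β t ∧ β t ≤ r (amin e v) := by
  classical
  set B := M * Matrix.diagonal (fun x => (r x : ℂ)) * Mᴴ with hBdef
  set z : Fin d → ℂ := fun j => ∑ p, star (Nb p t) * M (fe e v p) j with hz
  have hdiag : Nbᴴ * (B.submatrix (fe e v) (fe e v)) * Nb
      = Matrix.diagonal (fun p => (β p : ℂ)) := by
    rw [hBb]
    calc Nbᴴ * (Nb * Matrix.diagonal (fun p => (β p : ℂ)) * Nbᴴ) * Nb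
        = (Nbᴴ * Nb) * Matrix.diagonal (fun p => (β p : ℂ)) * (Nbᴴ * Nb) := by
          noncomm_ring
      _ = Matrix.diagonal (fun p => (β p : ℂ)) := by
          rw [← Matrix.star_eq_conjTranspose, Matrix.mem_unitaryGroup_iff'.mp hNbU,
            one_mul, mul_one]
  have expand : (Nbᴴ * (B.submatrix (fe e v) (fe e v)) * Nb) t t
      = ∑ j : Fin d, ∑ p, ∑ q, (r j : ℂ)
          * ((star (Nb p t) * M (fe e v p) j) * (star (M (fe e v q) j) * Nb q t)) := by
    rw [Matrix.mul_apply]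
    have h1 : ∀ q, (Nbᴴ * B.submatrix (fe e v) (fe e v)) t q * Nb q t
        = ∑ p, ∑ j : Fin d, (r j : ℂ)
            * ((star (Nb p t) * M (fe e v p) j) * (star (M (fe e v q) j) * Nb q t)) := by
      intro q
      rw [Matrix.mul_apply, Finset.sum_mul]
      refine Finset.sum_congr rfl fun p _ => ?_
      rw [Matrix.conjTranspose_apply, Matrix.submatrix_apply, hBdef, Bapply,
        Finset.mul_sum, Finset.sum_mul]
      refine Finset.sum_congr rfl fun j _ => ?_
      ring
    rw [Finset.sum_congr rfl fun q _ => h1 q]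
    calc ∑ q, ∑ p, ∑ j : Fin d, (r j : ℂ)
          * ((star (Nb p t) * M (fe e v p) j) * (star (M (fe e v q) j) * Nb q t))
        = ∑ p, ∑ q, ∑ j : Fin d, (r j : ℂ)
          * ((star (Nb p t) * M (fe e v p) j) * (star (M (fe e v q) j) * Nb q t)) :=
          Finset.sum_comm
      _ = ∑ p, ∑ j : Fin d, ∑ q, (r j : ℂ)
          * ((star (Nb p t) * M (fe e v p) j) * (star (M (fe e v q) j) * Nb q t)) :=
          Finset.sum_congr rfl fun p _ => Finset.sum_comm
      _ = ∑ j : Fin d, ∑ p, ∑ q, (r j : ℂ)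
          * ((star (Nb p t) * M (fe e v p) j) * (star (M (fe e v q) j) * Nb q t)) :=
          Finset.sum_comm
  have hstarz : ∀ j, star (z j) = ∑ q, star (M (fe e v q) j) * Nb q t := by
    intro j
    rw [hz]
    rw [star_sum]
    refine Finset.sum_congr rfl fun q _ => ?_
    rw [star_mul', star_star, mul_comm]
  have hβtC : ((β t : ℝ) : ℂ) = ∑ j : Fin d, (r j : ℂ) * (z j * star (z j)) := by
    have h0 : Matrix.diagonal (fun p => (β p : ℂ)) t t = ((β t : ℝ) : ℂ) :=
      Matrix.diagonal_apply_eq _ t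
    rw [← h0, ← hdiag, expand]
    refine Finset.sum_congr rfl fun j _ => ?_
    rw [hstarz, hz]
    rw [Finset.sum_mul_sum, Finset.mul_sum]
    refine Finset.sum_congr rfl fun p _ => ?_
    rw [Finset.mul_sum]
  have honeC : (1 : ℂ) = ∑ j : Fin d, z j * star (z j) := by
    have h2 : ∀ j, z j * star (z j)
        = ∑ p, ∑ q, (star (Nb p t) * M (fe e v p) j) * (star (M (fe e v q) j) * Nb q t) := by
      intro j
      rw [hstarz, hz, Finset.sum_mul_sum]
    rw [Finset.sum_congr rfl fun j _ => h2 j]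
    have h3 : ∑ j : Fin d, ∑ p, ∑ q,
          (star (Nb p t) * M (fe e v p) j) * (star (M (fe e v q) j) * Nb q t)
        = ∑ p, ∑ q, ∑ j : Fin d,
          (star (Nb p t) * M (fe e v p) j) * (star (M (fe e v q) j) * Nb q t) := by
      calc ∑ j : Fin d, ∑ p, ∑ q,
            (star (Nb p t) * M (fe e v p) j) * (star (M (fe e v q) j) * Nb q t)
          = ∑ p, ∑ j : Fin d, ∑ q,
            (star (Nb p t) * M (fe e v p) j) * (star (M (fe e v q) j) * Nb q t) :=
            Finset.sum_comm
        _ = ∑ p, ∑ q, ∑ j : Fin d,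
            (star (Nb p t) * M (fe e v p) j) * (star (M (fe e v q) j) * Nb q t) :=
            Finset.sum_congr rfl fun p _ => Finset.sum_comm
    rw [h3]
    have h4 : ∀ p q, ∑ j : Fin d,
          (star (Nb p t) * M (fe e v p) j) * (star (M (fe e v q) j) * Nb q t)
        = (star (Nb p t) * Nb q t) * (if fe e v p = fe e v q then 1 else 0) := by
      intro p q
      rw [← rowOrtho hM (fe e v p) (fe e v q), Finset.mul_sum]
      refine Finset.sum_congr rfl fun j _ => ?_
      ring
    rw [Finset.sum_congr rfl fun p _ => Finset.sum_congr rfl fun q _ => h4 p q]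
    have h5 : ∀ p q, (star (Nb p t) * Nb q t) * (if fe e v p = fe e v q then (1:ℂ) else 0)
        = if q = p then star (Nb p t) * Nb q t else 0 := by
      intro p q
      by_cases h : p = q
      · subst h; simp
      · have : fe e v p ≠ fe e v q := fun hh => h (fe_inj e v hh)
        have h' : ¬ q = p := fun hh => h hh.symm
        simp [this, h']
    rw [Finset.sum_congr rfl fun p _ => Finset.sum_congr rfl fun q _ => h5 p q]
    have h6 : ∀ p, (∑ q, if q = p then star (Nb p t) * Nb q t else 0)
        = star (Nb p t) * Nb p t := by
      intro p
      rw [Finset.sum_ite_eq' univ p (fun q => star (Nb p t) * Nb q t)]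
      simp
    rw [Finset.sum_congr rfl fun p _ => h6 p]
    have h7 : (Nbᴴ * Nb) t t = 1 := by
      rw [← Matrix.star_eq_conjTranspose, Matrix.mem_unitaryGroup_iff'.mp hNbU,
        Matrix.one_apply_eq]
    rw [Matrix.mul_apply] at h7
    rw [← h7]
    exact Finset.sum_congr rfl fun p _ => by rw [Matrix.conjTranspose_apply]
  -- real versions
  have hβt : β t = ∑ j : Fin d, r j * Complex.normSq (z j) := by
    have h : ((β t : ℝ) : ℂ) = ((∑ j : Fin d, r j * Complex.normSq (z j) : ℝ) : ℂ) := by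
      rw [hβtC, Complex.ofReal_sum]
      refine Finset.sum_congr rfl fun j _ => ?_
      rw [Complex.star_def, Complex.mul_conj, Complex.ofReal_mul]
    exact_mod_cast h
  have hone : (1 : ℝ) = ∑ j : Fin d, Complex.normSq (z j) := by
    have h : ((1 : ℝ) : ℂ) = ((∑ j : Fin d, Complex.normSq (z j) : ℝ) : ℂ) := by
      rw [Complex.ofReal_sum, Complex.ofReal_one, honeC]
      refine Finset.sum_congr rfl fun j _ => ?_
      rw [Complex.star_def, Complex.mul_conj]
    exact_mod_cast h
  have claim3 : ∀ j : Fin d, z j ≠ 0 → r (bmax e v) ≤ r j ∧ r j ≤ r (amin e v) := by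
    intro j hjz
    have hex : ∃ p, M (fe e v p) j ≠ 0 := by
      by_contra h
      push_neg at h
      apply hjz
      rw [hz]
      exact Finset.sum_eq_zero fun p _ => by rw [h p, mul_zero]
    obtain ⟨p, hp⟩ := hex
    have hamin : amin e (fe e v p) = amin e v := amin_congr (mem_blk.1 (fe_mem e v p))
    have hbmax : bmax e (fe e v p) = bmax e v := bmax_congr (mem_blk.1 (fe_mem e v p))
    constructor
    · by_contra h
      push_neg at h
      exact hp (MS2 he hr hM hslack (by rw [hbmax]; exact h))
    · by_contra h
      push_neg at h
      exact hp (MS1 he hr hM hslack (by rw [hamin]; exact h))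
  constructor
  · -- lower bound
    have h1 : ∀ j ∈ (univ : Finset (Fin d)),
        r (bmax e v) * Complex.normSq (z j) ≤ r j * Complex.normSq (z j) := by
      intro j _
      rcases eq_or_ne (z j) 0 with h | h
      · rw [h]; simp
      · exact mul_le_mul_of_nonneg_right (claim3 j h).1 (Complex.normSq_nonneg _)
    have h2 := Finset.sum_le_sum h1
    rw [← Finset.mul_sum, ← hone, mul_one] at h2
    rw [hβt]
    exact h2
  · -- upper bound
    have h1 : ∀ j ∈ (univ : Finset (Fin d)),
        r j * Complex.normSq (z j) ≤ r (amin e v) * Complex.normSq (z j) := by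
      intro j _
      rcases eq_or_ne (z j) 0 with h | h
      · rw [h]; simp
      · exact mul_le_mul_of_nonneg_right (claim3 j h).2 (Complex.normSq_nonneg _)
    have h2 := Finset.sum_le_sum h1
    rw [← Finset.mul_sum, ← hone, mul_one] at h2
    rw [hβt]
    exact h2

end BlockBound

section Sorting
variable {d : ℕ}

lemma antitone_eq_of_multiset {f g : Fin d → ℝ} (hf : Antitone f) (hg : Antitone g)
    (h : Multiset.map f Finset.univ.val = Multiset.map g Finset.univ.val) : f = g := by
  have h1 : (List.ofFn f : Multiset ℝ) = (List.ofFn g : Multiset ℝ) := by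
    rw [← Fin.univ_val_map, ← Fin.univ_val_map]; exact h
  rw [Multiset.coe_eq_coe] at h1
  haveI : IsAntisymm ℝ (· ≥ ·) := ⟨fun a b hab hba => le_antisymm hba hab⟩
  have hs1 : (List.ofFn f).Pairwise (· ≥ ·) :=
    List.pairwise_ofFn.2 (by intro i j hij; exact hf hij.le)
  have hs2 : (List.ofFn g).Pairwise (· ≥ ·) :=
    List.pairwise_ofFn.2 (by intro i j hij; exact hg hij.le)
  exact List.ofFn_injective (List.Perm.eq_of_pairwise' hs1 hs2 h1)

lemma smul_one_sub_diagonal (w : Fin d → ℝ) (z : ℂ) :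
    z • (1 : Matrix (Fin d) (Fin d) ℂ) - Matrix.diagonal (fun i => (w i : ℂ))
      = Matrix.diagonal (fun i => z - (w i : ℂ)) := by
  ext i j
  by_cases h : i = j
  · subst h
    simp [Matrix.one_apply_eq, Matrix.diagonal_apply_eq]
  · simp [Matrix.one_apply_ne h, Matrix.diagonal_apply_ne _ h]

lemma det_conj_diag {K : Matrix (Fin d) (Fin d) ℂ} (hK : K ∈ Matrix.unitaryGroup (Fin d) ℂ)
    (D : Matrix (Fin d) (Fin d) ℂ) (z : ℂ) :
    (z • (1 : Matrix (Fin d) (Fin d) ℂ) - K * D * Kᴴ).det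
      = (z • (1 : Matrix (Fin d) (Fin d) ℂ) - D).det := by
  have hKK : K * Kᴴ = 1 := by
    rw [← Matrix.star_eq_conjTranspose]
    exact Matrix.mem_unitaryGroup_iff.mp hK
  have h1 : z • (1 : Matrix (Fin d) (Fin d) ℂ) - K * D * Kᴴ
      = K * (z • (1 : Matrix (Fin d) (Fin d) ℂ) - D) * Kᴴ := by
    rw [Matrix.mul_sub, Matrix.sub_mul]
    congr 1
    rw [mul_smul_comm, mul_one, smul_mul_assoc, hKK]
  rw [h1, Matrix.det_mul, Matrix.det_mul]
  have h3 : K.det * Kᴴ.det = 1 := by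
    rw [← Matrix.det_mul, hKK, Matrix.det_one]
  calc K.det * (z • (1 : Matrix (Fin d) (Fin d) ℂ) - D).det * Kᴴ.det
      = (z • (1 : Matrix (Fin d) (Fin d) ℂ) - D).det * (K.det * Kᴴ.det) := by ring
    _ = (z • (1 : Matrix (Fin d) (Fin d) ℂ) - D).det := by rw [h3, mul_one]

lemma multiset_eq_of_conj {f g : Fin d → ℝ} {K : Matrix (Fin d) (Fin d) ℂ}
    (hK : K ∈ Matrix.unitaryGroup (Fin d) ℂ)
    (h : K * Matrix.diagonal (fun i => (g i : ℂ)) * Kᴴ = Matrix.diagonal (fun i => (f i : ℂ))) :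
    Multiset.map f Finset.univ.val = Multiset.map g Finset.univ.val := by
  have hev : ∀ z : ℂ, (∏ i : Fin d, (z - (f i : ℂ))) = ∏ i : Fin d, (z - (g i : ℂ)) := by
    intro z
    have h1 := det_conj_diag hK (Matrix.diagonal (fun i => (g i : ℂ))) z
    rw [h, smul_one_sub_diagonal, smul_one_sub_diagonal, Matrix.det_diagonal,
      Matrix.det_diagonal] at h1
    exact h1
  have hpoly : (∏ i : Fin d, (Polynomial.X - Polynomial.C ((f i : ℝ) : ℂ)))
      = ∏ i : Fin d, (Polynomial.X - Polynomial.C ((g i : ℝ) : ℂ)) := by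
    apply Polynomial.funext
    intro z
    simp only [Polynomial.eval_prod, Polynomial.eval_sub, Polynomial.eval_X, Polynomial.eval_C]
    exact hev z
  have hroots : ∀ w : Fin d → ℝ,
      (∏ i : Fin d, (Polynomial.X - Polynomial.C ((w i : ℝ) : ℂ))).roots
        = Multiset.map (fun i => ((w i : ℝ) : ℂ)) Finset.univ.val := by
    intro w
    rw [Finset.prod_eq_multiset_prod]
    have : Multiset.map (fun i => Polynomial.X - Polynomial.C ((w i : ℝ) : ℂ)) Finset.univ.val
        = Multiset.map (fun a => Polynomial.X - Polynomial.C a)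
            (Multiset.map (fun i => ((w i : ℝ) : ℂ)) Finset.univ.val) := by
      rw [Multiset.map_map]; rfl
    rw [this, Polynomial.roots_multiset_prod_X_sub_C]
  have hmc : Multiset.map (fun i => ((f i : ℝ) : ℂ)) Finset.univ.val
      = Multiset.map (fun i => ((g i : ℝ) : ℂ)) Finset.univ.val := by
    rw [← hroots f, ← hroots g, hpoly]
  have hf' : Multiset.map (fun i => ((f i : ℝ) : ℂ)) Finset.univ.val
      = Multiset.map (fun x : ℝ => (x : ℂ)) (Multiset.map f Finset.univ.val) := by
    rw [Multiset.map_map]; rfl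
  have hg' : Multiset.map (fun i => ((g i : ℝ) : ℂ)) Finset.univ.val
      = Multiset.map (fun x : ℝ => (x : ℂ)) (Multiset.map g Finset.univ.val) := by
    rw [Multiset.map_map]; rfl
  rw [hf', hg'] at hmc
  exact Multiset.map_injective Complex.ofReal_injective hmc

end Sorting

section KeyConstruction
variable {d : ℕ}

lemma key_construction {e r : Fin d → ℝ} (he : Monotone e) (hr : Antitone r)
    {M : Matrix (Fin d) (Fin d) ℂ} (hM : M ∈ Matrix.unitaryGroup (Fin d) ℂ)
    (hslack : Slack d (sOf M) (eOf e) (eOf r) = 0) :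
    ∃ N ∈ Matrix.unitaryGroup (Fin d) ℂ,
      N * Matrix.diagonal (fun i => (e i : ℂ)) * Nᴴ = Matrix.diagonal (fun i => (e i : ℂ)) ∧
      N * Matrix.diagonal (fun i => (r i : ℂ)) * Nᴴ
        = M * Matrix.diagonal (fun i => (r i : ℂ)) * Mᴴ := by
  classical
  have hBherm : (M * Matrix.diagonal (fun x => (r x : ℂ)) * Mᴴ).IsHermitian :=
    Matrix.isHermitian_mul_mul_conjTranspose M (diag_herm r)
  have hsub : ∀ v : Fin d,
      ((M * Matrix.diagonal (fun x => (r x : ℂ)) * Mᴴ).submatrix (fe e v) (fe e v)).IsHermitian :=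
    fun v => hBherm.submatrix _
  choose Nb hNbU β hβanti hBbEq using fun v : Fin d => exists_spectral_anti (hsub v)
  have memi : ∀ i : Fin d, i ∈ blk e (amin e i) := fun i => mem_blk.2 (e_amin e i).symm
  have memj : ∀ i j : Fin d, e i = e j → j ∈ blk e (amin e i) :=
    fun i j h => mem_blk.2 (h.symm.trans (e_amin e i).symm)
  set N : Matrix (Fin d) (Fin d) ℂ := Matrix.of (fun i j =>
    if h : e i = e j then
      Nb (amin e i) (idxB e (amin e i) i (memi i)) (idxB e (amin e i) j (memj i j h))
    else 0) with hN
  set βg : Fin d → ℝ := fun i => β (amin e i) (idxB e (amin e i) i (memi i)) with hβg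
  have Nzero : ∀ i j : Fin d, e i ≠ e j → N i j = 0 := by
    intro i j h
    rw [hN]
    simp only [Matrix.of_apply]
    rw [dif_neg h]
  have Neval : ∀ (v i j : Fin d) (hv : amin e i = v) (hij : e i = e j)
      (hi : i ∈ blk e v) (hj : j ∈ blk e v),
      N i j = Nb v (idxB e v i hi) (idxB e v j hj) := by
    intro v i j hv hij hi hj
    subst hv
    rw [hN]
    simp only [Matrix.of_apply]
    rw [dif_pos hij]
  have βgeval : ∀ (v x : Fin d) (hv : amin e x = v) (hx : x ∈ blk e v),
      βg x = β v (idxB e v x hx) := by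
    intro v x hv hx
    subst hv
    rw [hβg]
  -- unitarity
  have hNU : N ∈ Matrix.unitaryGroup (Fin d) ℂ := by
    rw [Matrix.mem_unitaryGroup_iff]
    ext i i'
    rw [Matrix.mul_apply]
    have hterm : ∀ j, N i j * (star N) j i' = N i j * star (N i' j) := by
      intro j; rw [Matrix.star_apply]
    rw [Finset.sum_congr rfl fun j _ => hterm j]
    by_cases h : e i = e i'
    · set v := amin e i with hv
      have hvi' : amin e i' = v := by rw [hv]; exact (amin_congr h).symm
      have hmi : i ∈ blk e v := by rw [hv]; exact memi i
      have hmi' : i' ∈ blk e v := by rw [hv]; exact memj i i' h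
      have heiv : e i = e v := mem_blk.1 hmi
      have hred : ∑ j : Fin d, N i j * star (N i' j)
          = ∑ p : Fin (mb e v), N i (fe e v p) * star (N i' (fe e v p)) := by
        rw [sum_fe e v (fun j => N i j * star (N i' j))]
        refine (Finset.sum_subset (Finset.subset_univ _) ?_).symm
        intro x _ hx
        have hex : e i ≠ e x := fun hh => hx (mem_blk.2 (hh.symm.trans heiv))
        rw [Nzero i x hex, zero_mul]
      rw [hred]
      have hNi : ∀ p, N i (fe e v p) = Nb v (idxB e v i hmi) p := by
        intro p
        have hij : e i = e (fe e v p) := heiv.trans (mem_blk.1 (fe_mem e v p)).symm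
        rw [Neval v i (fe e v p) hv.symm hij hmi (fe_mem e v p), idx_fe]
      have hNi' : ∀ p, N i' (fe e v p) = Nb v (idxB e v i' hmi') p := by
        intro p
        have hij : e i' = e (fe e v p) :=
          (h.symm.trans heiv).trans (mem_blk.1 (fe_mem e v p)).symm
        rw [Neval v i' (fe e v p) hvi' hij hmi' (fe_mem e v p), idx_fe]
      rw [Finset.sum_congr rfl fun p _ => by rw [hNi p, hNi' p]]
      rw [rowOrtho (hNbU v) (idxB e v i hmi) (idxB e v i' hmi'), Matrix.one_apply]
      by_cases hii : i = i'
      · subst hii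
        simp
      · have hne : idxB e v i hmi ≠ idxB e v i' hmi' :=
          fun hh => hii (idx_inj e v hmi hmi' hh)
        rw [if_neg hne, if_neg hii]
    · have hzero : ∀ j, N i j * star (N i' j) = 0 := by
        intro j
        by_cases hj : e i = e j
        · have hj' : e i' ≠ e j := fun hh => h (hj.trans hh.symm)
          rw [Nzero i' j hj', star_zero, mul_zero]
        · rw [Nzero i j hj, zero_mul]
      rw [Finset.sum_eq_zero fun j _ => hzero j, Matrix.one_apply]
      have hii : i ≠ i' := fun hh => h (congrArg e hh)
      rw [if_neg hii]
  -- commutes with diagonal e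
  have hNe : N * Matrix.diagonal (fun i => (e i : ℂ)) * Nᴴ
      = Matrix.diagonal (fun i => (e i : ℂ)) := by
    have hcomm : N * Matrix.diagonal (fun i => (e i : ℂ))
        = Matrix.diagonal (fun i => (e i : ℂ)) * N := by
      ext i j
      rw [Matrix.mul_diagonal, Matrix.diagonal_mul]
      by_cases h : e i = e j
      · rw [h, mul_comm]
      · rw [Nzero i j h, zero_mul, mul_zero]
    rw [hcomm, Matrix.mul_assoc, ← Matrix.star_eq_conjTranspose,
      Matrix.mem_unitaryGroup_iff.mp hNU, mul_one]
  -- N conjugates diagonal βg to B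
  have hNB : N * Matrix.diagonal (fun i => (βg i : ℂ)) * Nᴴ
      = M * Matrix.diagonal (fun x => (r x : ℂ)) * Mᴴ := by
    ext i i'
    rw [Bapply N βg i i']
    by_cases h : e i = e i'
    · set v := amin e i with hv
      have hvi' : amin e i' = v := by rw [hv]; exact (amin_congr h).symm
      have hmi : i ∈ blk e v := by rw [hv]; exact memi i
      have hmi' : i' ∈ blk e v := by rw [hv]; exact memj i i' h
      have heiv : e i = e v := mem_blk.1 hmi
      have hvv : amin e v = v := by
        rw [hv]
        exact amin_congr (e_amin e i)
      have hred : ∑ j : Fin d, N i j * (βg j : ℂ) * star (N i' j)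
          = ∑ p : Fin (mb e v), N i (fe e v p) * (βg (fe e v p) : ℂ) * star (N i' (fe e v p)) := by
        rw [sum_fe e v (fun j => N i j * (βg j : ℂ) * star (N i' j))]
        refine (Finset.sum_subset (Finset.subset_univ _) ?_).symm
        intro x _ hx
        have hex : e i ≠ e x := fun hh => hx (mem_blk.2 (hh.symm.trans heiv))
        rw [Nzero i x hex, zero_mul, zero_mul]
      rw [hred]
      have hNi : ∀ p, N i (fe e v p) = Nb v (idxB e v i hmi) p := by
        intro p
        have hij : e i = e (fe e v p) := heiv.trans (mem_blk.1 (fe_mem e v p)).symm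
        rw [Neval v i (fe e v p) hv.symm hij hmi (fe_mem e v p), idx_fe]
      have hNi' : ∀ p, N i' (fe e v p) = Nb v (idxB e v i' hmi') p := by
        intro p
        have hij : e i' = e (fe e v p) :=
          (h.symm.trans heiv).trans (mem_blk.1 (fe_mem e v p)).symm
        rw [Neval v i' (fe e v p) hvi' hij hmi' (fe_mem e v p), idx_fe]
      have hβp : ∀ p, βg (fe e v p) = β v p := by
        intro p
        have hvp : amin e (fe e v p) = v :=
          (amin_congr (mem_blk.1 (fe_mem e v p))).trans hvv
        rw [βgeval v (fe e v p) hvp (fe_mem e v p), idx_fe]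
      rw [Finset.sum_congr rfl fun p _ => by rw [hNi p, hNi' p, hβp p]]
      rw [← Bapply (Nb v) (β v) (idxB e v i hmi) (idxB e v i' hmi'), ← hBbEq v,
        Matrix.submatrix_apply, fe_idx, fe_idx]
    · have hzero : ∀ j, N i j * (βg j : ℂ) * star (N i' j) = 0 := by
        intro j
        by_cases hj : e i = e j
        · have hj' : e i' ≠ e j := fun hh => h (hj.trans hh.symm)
          rw [Nzero i' j hj', star_zero, mul_zero]
        · rw [Nzero i j hj, zero_mul, zero_mul]
      rw [Finset.sum_eq_zero fun j _ => hzero j]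
      exact (BD he hr hM hslack h).symm
  -- bounds for βg
  have hbound : ∀ x : Fin d, r (bmax e x) ≤ βg x ∧ βg x ≤ r (amin e x) := by
    intro x
    have hvv : amin e (amin e x) = amin e x := amin_congr (e_amin e x)
    have hx : x ∈ blk e (amin e x) := memi x
    have hb := block_bound he hr hM hslack (amin e x) (hNbU (amin e x)) (hBbEq (amin e x))
      (idxB e (amin e x) x hx)
    have hβx : βg x = β (amin e x) (idxB e (amin e x) x hx) := βgeval _ x rfl hx
    have hbm : bmax e (amin e x) = bmax e x := (bmax_congr (e_amin e x)).symm ▸ rfl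
    constructor
    · rw [hβx]
      have h1 := hb.1
      rwa [bmax_congr (e_amin e x)] at h1
    · rw [hβx]
      have h2 := hb.2
      rwa [amin_congr (e_amin e x)] at h2
  -- βg is antitone
  have hβganti : Antitone βg := by
    intro i i' hii'
    by_cases h : e i = e i'
    · set v := amin e i with hv
      have hvi' : amin e i' = v := by rw [hv]; exact (amin_congr h).symm
      have hmi : i ∈ blk e v := by rw [hv]; exact memi i
      have hmi' : i' ∈ blk e v := by rw [hv]; exact memj i i' h
      rw [βgeval v i hv.symm hmi, βgeval v i' hvi' hmi']
      exact hβanti v (idx_mono e v hmi hmi' hii')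
    · have hlt : e i < e i' := lt_of_le_of_ne (he hii') h
      have hba : bmax e i < amin e i' := by
        by_contra hcon
        push_neg at hcon
        have h1 : e (amin e i') ≤ e (bmax e i) := he hcon
        rw [e_amin e i', e_bmax e i] at h1
        exact absurd h1 (not_le.2 hlt)
      calc βg i' ≤ r (amin e i') := (hbound i').2
        _ ≤ r (bmax e i) := hr (le_of_lt hba)
        _ ≤ βg i := (hbound i).1
  -- βg = r via multiset of eigenvalues
  have hβgr : βg = r := by
    have hKU : Mᴴ * N ∈ Matrix.unitaryGroup (Fin d) ℂ := by
      rw [← Matrix.star_eq_conjTranspose]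
      exact mul_mem (Unitary.star_mem hM) hNU
    have hconj : (Mᴴ * N) * Matrix.diagonal (fun i => (βg i : ℂ)) * (Mᴴ * N)ᴴ
        = Matrix.diagonal (fun i => (r i : ℂ)) := by
      have hKH : (Mᴴ * N)ᴴ = Nᴴ * M := by
        rw [Matrix.conjTranspose_mul, Matrix.conjTranspose_conjTranspose]
      rw [hKH]
      have assoc1 : Mᴴ * N * Matrix.diagonal (fun i => (βg i : ℂ)) * (Nᴴ * M)
          = Mᴴ * (N * Matrix.diagonal (fun i => (βg i : ℂ)) * Nᴴ) * M := by
        noncomm_ring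
      rw [assoc1, hNB]
      have assoc2 : Mᴴ * (M * Matrix.diagonal (fun x => (r x : ℂ)) * Mᴴ) * M
          = (Mᴴ * M) * Matrix.diagonal (fun x => (r x : ℂ)) * (Mᴴ * M) := by
        noncomm_ring
      rw [assoc2, ← Matrix.star_eq_conjTranspose, Matrix.mem_unitaryGroup_iff'.mp hM,
        one_mul, mul_one]
    have hms := multiset_eq_of_conj hKU hconj
    exact antitone_eq_of_multiset hβganti hr hms.symm
  rw [hβgr] at hNB
  exact ⟨N, hNU, hNe, hNB⟩

end KeyConstruction

section Final
variable {d : ℕ}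

lemma trace_form (K : Matrix (Fin d) (Fin d) ℂ) (e r : Fin d → ℝ) :
    (Matrix.trace (Matrix.diagonal (fun i => (e i : ℂ))
        * (K * Matrix.diagonal (fun i => (r i : ℂ)) * Kᴴ))).re
      = ∑ i : Fin d, ∑ j : Fin d, e i * r j * Complex.normSq (K i j) := by
  have h1 : Matrix.trace (Matrix.diagonal (fun i => (e i : ℂ))
        * (K * Matrix.diagonal (fun i => (r i : ℂ)) * Kᴴ))
      = ((∑ i : Fin d, ∑ j : Fin d, e i * r j * Complex.normSq (K i j) : ℝ) : ℂ) := by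
    rw [Matrix.trace, Complex.ofReal_sum]
    refine Finset.sum_congr rfl fun i _ => ?_
    rw [Matrix.diag_apply, Matrix.diagonal_mul, Bapply K r i i, Finset.mul_sum,
      Complex.ofReal_sum]
    refine Finset.sum_congr rfl fun j _ => ?_
    rw [Complex.star_def]
    have h2 : K i j * ((r j : ℝ) : ℂ) * (starRingEnd ℂ) (K i j)
        = ((r j : ℝ) : ℂ) * (K i j * (starRingEnd ℂ) (K i j)) := by ring
    rw [h2, Complex.mul_conj]
    push_cast
    ring
  rw [h1, Complex.ofReal_re]

lemma energy_orbit {V W U : Matrix (Fin d) (Fin d) ℂ} (hV : V ∈ Matrix.unitaryGroup (Fin d) ℂ)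
    (e r : Fin d → ℝ) :
    energy (V * Matrix.diagonal (fun i => (e i : ℂ)) * Vᴴ)
        (U * (W * Matrix.diagonal (fun i => (r i : ℂ)) * Wᴴ) * Uᴴ)
      = ∑ i : Fin d, ∑ j : Fin d, e i * r j * Complex.normSq ((Vᴴ * (U * W)) i j) := by
  unfold energy
  have hKH : (Vᴴ * (U * W))ᴴ = (Wᴴ * Uᴴ) * V := by
    rw [Matrix.conjTranspose_mul, Matrix.conjTranspose_mul,
      Matrix.conjTranspose_conjTranspose]
  have hVV : V * Vᴴ = 1 := by
    rw [← Matrix.star_eq_conjTranspose]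
    exact Matrix.mem_unitaryGroup_iff.mp hV
  have hmat : (V * Matrix.diagonal (fun i => (e i : ℂ)) * Vᴴ)
        * (U * (W * Matrix.diagonal (fun i => (r i : ℂ)) * Wᴴ) * Uᴴ)
      = V * ((Matrix.diagonal (fun i => (e i : ℂ))
          * ((Vᴴ * (U * W)) * Matrix.diagonal (fun i => (r i : ℂ)) * (Vᴴ * (U * W))ᴴ)) * Vᴴ) := by
    rw [hKH]
    calc (V * Matrix.diagonal (fun i => (e i : ℂ)) * Vᴴ)
          * (U * (W * Matrix.diagonal (fun i => (r i : ℂ)) * Wᴴ) * Uᴴ)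
        = (V * Matrix.diagonal (fun i => (e i : ℂ)) * Vᴴ)
          * (U * (W * Matrix.diagonal (fun i => (r i : ℂ)) * Wᴴ) * Uᴴ) * (V * Vᴴ) := by
          rw [hVV, mul_one]
      _ = V * ((Matrix.diagonal (fun i => (e i : ℂ))
          * ((Vᴴ * (U * W)) * Matrix.diagonal (fun i => (r i : ℂ)) * ((Wᴴ * Uᴴ) * V))) * Vᴴ) := by
          simp only [Matrix.mul_assoc]
  rw [hmat, Matrix.trace_mul_comm]
  have hassoc : (Matrix.diagonal (fun i => (e i : ℂ))
        * ((Vᴴ * (U * W)) * Matrix.diagonal (fun i => (r i : ℂ)) * (Vᴴ * (U * W))ᴴ)) * Vᴴ * V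
      = Matrix.diagonal (fun i => (e i : ℂ))
        * ((Vᴴ * (U * W)) * Matrix.diagonal (fun i => (r i : ℂ)) * (Vᴴ * (U * W))ᴴ) := by
    rw [Matrix.mul_assoc, ← Matrix.star_eq_conjTranspose,
      Matrix.mem_unitaryGroup_iff'.mp hV, mul_one]
  rw [hassoc, trace_form]

lemma sum_one_eval (e r : Fin d → ℝ) :
    ∑ i : Fin d, ∑ j : Fin d, e i * r j * Complex.normSq ((1 : Matrix (Fin d) (Fin d) ℂ) i j)
      = ∑ i : Fin d, e i * r i := by
  refine Finset.sum_congr rfl fun i _ => ?_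
  have h : ∀ j, e i * r j * Complex.normSq ((1 : Matrix (Fin d) (Fin d) ℂ) i j)
      = if j = i then e i * r i else 0 := by
    intro j
    rw [Matrix.one_apply]
    by_cases hij : i = j
    · subst hij
      simp
    · have hji : ¬ j = i := fun hh => hij hh.symm
      simp [hij, hji]
  rw [Finset.sum_congr rfl fun j _ => h j, Finset.sum_ite_eq' univ i _]
  simp

lemma trace_ineq {e r : Fin d → ℝ} (he : Monotone e) (hr : Antitone r)
    {K : Matrix (Fin d) (Fin d) ℂ} (hK : K ∈ Matrix.unitaryGroup (Fin d) ℂ) :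
    ∑ i : Fin d, e i * r i
      ≤ ∑ i : Fin d, ∑ j : Fin d, e i * r j * Complex.normSq (K i j) := by
  have h := slack_nonneg (sOf_nonneg K) (sOf_row hK) (sOf_col hK) (eOf_mono he) (eOf_anti hr)
  rw [slack_fin] at h
  linarith

lemma passive_eq {H ρ V W : Matrix (Fin d) (Fin d) ℂ} {e r : Fin d → ℝ}
    (hV : V ∈ Matrix.unitaryGroup (Fin d) ℂ) (hW : W ∈ Matrix.unitaryGroup (Fin d) ℂ)
    (he : Monotone e) (hr : Antitone r)
    (hH : H = V * Matrix.diagonal (fun i => (e i : ℂ)) * Vᴴ)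
    (hρ : ρ = W * Matrix.diagonal (fun i => (r i : ℂ)) * Wᴴ) :
    passiveEnergy H ρ = ∑ i : Fin d, e i * r i := by
  have hlow : ∀ x ∈ {x : ℝ | ∃ U ∈ Matrix.unitaryGroup (Fin d) ℂ,
      x = energy H (U * ρ * Uᴴ)}, (∑ i : Fin d, e i * r i) ≤ x := by
    rintro x ⟨U, hU, rfl⟩
    rw [hH, hρ, energy_orbit hV]
    have hKmem : Vᴴ * (U * W) ∈ Matrix.unitaryGroup (Fin d) ℂ := by
      rw [← Matrix.star_eq_conjTranspose]
      exact mul_mem (Unitary.star_mem hV) (mul_mem hU hW)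
    exact trace_ineq he hr hKmem
  have hmem0 : (∑ i : Fin d, e i * r i) ∈ {x : ℝ | ∃ U ∈ Matrix.unitaryGroup (Fin d) ℂ,
      x = energy H (U * ρ * Uᴴ)} := by
    refine ⟨V * Wᴴ, ?_, ?_⟩
    · rw [← Matrix.star_eq_conjTranspose]
      exact mul_mem hV (Unitary.star_mem hW)
    · rw [hH, hρ, energy_orbit hV]
      have hK1 : Vᴴ * ((V * Wᴴ) * W) = 1 := by
        have h1 : Vᴴ * ((V * Wᴴ) * W) = (Vᴴ * V) * (Wᴴ * W) := by noncomm_ring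
        rw [h1, ← Matrix.star_eq_conjTranspose (M := V), ← Matrix.star_eq_conjTranspose (M := W),
          Matrix.mem_unitaryGroup_iff'.mp hV, Matrix.mem_unitaryGroup_iff'.mp hW, one_mul]
      rw [hK1, sum_one_eval]
  unfold passiveEnergy
  apply le_antisymm
  · exact csInf_le ⟨∑ i : Fin d, e i * r i, hlow⟩ hmem0
  · exact le_csInf ⟨_, hmem0⟩ hlow

end Final

end ErgoAux

/-- a density matrix has zero ergotropy iff it is passive, i.e. it is
diagonal in a common eigenbasis with `H`, with populations nonincreasing in energy. -/
theorem ergotropy_eq_zero_iff_passive {d : ℕ} (H ρ : Matrix (Fin d) (Fin d) ℂ)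
    (hH : H.IsHermitian) (hρ : ρ.PosSemidef) (htr : ρ.trace = 1) :
    ergotropy H ρ = 0 ↔
      ∃ U ∈ Matrix.unitaryGroup (Fin d) ℂ, ∃ e r : Fin d → ℝ,
        Monotone e ∧ Antitone r ∧
        H = U * Matrix.diagonal (fun i => (e i : ℂ)) * Uᴴ ∧
        ρ = U * Matrix.diagonal (fun i => (r i : ℂ)) * Uᴴ := by
  obtain ⟨V, hV, e, he, hHeq⟩ := ErgoAux.exists_spectral_mono hH
  obtain ⟨W, hW, r, hranti, hρeq⟩ := ErgoAux.exists_spectral_anti hρ.1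
  have hpass : passiveEnergy H ρ = ∑ i : Fin d, e i * r i :=
    ErgoAux.passive_eq hV hW he hranti hHeq hρeq
  have hρ1 : ρ = (1 : Matrix (Fin d) (Fin d) ℂ) * ρ * (1 : Matrix (Fin d) (Fin d) ℂ)ᴴ := by
    rw [Matrix.conjTranspose_one, mul_one, one_mul]
  constructor
  · intro h0
    have hEρ : energy H ρ
        = ∑ i : Fin d, ∑ j : Fin d, e i * r j * Complex.normSq ((Vᴴ * W) i j) := by
      conv_lhs => rw [hρ1, hHeq, hρeq]
      rw [ErgoAux.energy_orbit hV]
      simp only [Matrix.one_mul]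
    have hsum : energy H ρ = ∑ i : Fin d, e i * r i := by
      unfold ergotropy at h0
      rw [hpass] at h0
      linarith
    have hMW : Vᴴ * W ∈ Matrix.unitaryGroup (Fin d) ℂ := by
      rw [← Matrix.star_eq_conjTranspose]
      exact mul_mem (Unitary.star_mem hV) hW
    have hzero : ErgoAux.Slack d (ErgoAux.sOf (Vᴴ * W)) (ErgoAux.eOf e) (ErgoAux.eOf r) = 0 := by
      rw [ErgoAux.slack_fin, ← hEρ, hsum, sub_self]
    obtain ⟨N, hNU, hNe, hNB⟩ := ErgoAux.key_construction he hranti hMW hzero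
    refine ⟨V * N, mul_mem hV hNU, e, r, he, hranti, ?_, ?_⟩
    · rw [Matrix.conjTranspose_mul]
      calc H = V * Matrix.diagonal (fun i => (e i : ℂ)) * Vᴴ := hHeq
        _ = V * (N * Matrix.diagonal (fun i => (e i : ℂ)) * Nᴴ) * Vᴴ := by rw [hNe]
        _ = V * N * Matrix.diagonal (fun i => (e i : ℂ)) * (Nᴴ * Vᴴ) := by
            simp only [Matrix.mul_assoc]
    · rw [Matrix.conjTranspose_mul]
      have hVV : V * Vᴴ = 1 := by
        rw [← Matrix.star_eq_conjTranspose]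
        exact Matrix.mem_unitaryGroup_iff.mp hV
      have hKH : (Vᴴ * W)ᴴ = Wᴴ * V := by
        rw [Matrix.conjTranspose_mul, Matrix.conjTranspose_conjTranspose]
      have hVM : V * ((Vᴴ * W) * Matrix.diagonal (fun i => (r i : ℂ)) * (Vᴴ * W)ᴴ) * Vᴴ
          = W * Matrix.diagonal (fun i => (r i : ℂ)) * Wᴴ := by
        rw [hKH]
        calc V * ((Vᴴ * W) * Matrix.diagonal (fun i => (r i : ℂ)) * (Wᴴ * V)) * Vᴴ
            = (V * Vᴴ) * (W * Matrix.diagonal (fun i => (r i : ℂ)) * Wᴴ) * (V * Vᴴ) := by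
              simp only [Matrix.mul_assoc]
          _ = W * Matrix.diagonal (fun i => (r i : ℂ)) * Wᴴ := by
              rw [hVV, one_mul, mul_one]
      calc ρ = W * Matrix.diagonal (fun i => (r i : ℂ)) * Wᴴ := hρeq
        _ = V * ((Vᴴ * W) * Matrix.diagonal (fun i => (r i : ℂ)) * (Vᴴ * W)ᴴ) * Vᴴ := hVM.symm
        _ = V * (N * Matrix.diagonal (fun i => (r i : ℂ)) * Nᴴ) * Vᴴ := by rw [hNB]
        _ = V * N * Matrix.diagonal (fun i => (r i : ℂ)) * (Nᴴ * Vᴴ) := by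
            simp only [Matrix.mul_assoc]
  · rintro ⟨U, hU, e', r', he', hr', hHeq', hρeq'⟩
    have hpass' : passiveEnergy H ρ = ∑ i : Fin d, e' i * r' i :=
      ErgoAux.passive_eq hU hU he' hr' hHeq' hρeq'
    have hE : energy H ρ = ∑ i : Fin d, e' i * r' i := by
      conv_lhs => rw [hρ1, hHeq', hρeq']
      rw [ErgoAux.energy_orbit hU]
      have hK1 : Uᴴ * ((1 : Matrix (Fin d) (Fin d) ℂ) * U) = 1 := by
        rw [one_mul, ← Matrix.star_eq_conjTranspose]
        exact Matrix.mem_unitaryGroup_iff'.mp hU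
      rw [hK1, ErgoAux.sum_one_eval]
    unfold ergotropy
    rw [hE, hpass']
    ring
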